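/- Let m be an even positive integer. Then there exists (g_0, g_1, ..., g_{m−1}, h) ∈ L_m with g_0 = m/2 − 1; moreover, if m + 1 is a prime power, then there exists (g_0, g_1, ..., g_{m−1}, h) ∈ L_m with g_0² = 1/(m + 1). In particular, L_m is nonempty. -/

import Mathlib

open Finset Complex

/-- The system of order `m` on `g`-level, in unknowns `(g_0, …, g_{m-1}, h)`,
with subscripts of `g` read modulo `m`. -/
def GLevel (m : ℕ) (g : ZMod m → ℂ) (h : ℂ) : Prop :=
  (∀ s : ℕ, 1 ≤ s → s ≤ m / 2 - 1 →
    ∑ t ∈ Finset.range m,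
      (-1 : ℂ) ^ t * g (t : ZMod m) * g ((2 * (s : ℤ) - (t : ℤ) : ℤ) : ZMod m) = 0) ∧
  (∀ s : ℕ, 1 ≤ s → s ≤ m / 2 →
    g (s : ZMod m) * g ((m - s : ℕ) : ZMod m) = (-1 : ℂ) ^ s) ∧
  (∀ s : ℕ, 1 ≤ s → s ≤ m / 2 - 1 →
    h ^ s * g (s : ZMod m) * g ((m / 2 + s : ℕ) : ZMod m)
      = g ((2 * s : ℕ) : ZMod m) * g ((m / 2 : ℕ) : ZMod m)) ∧
  h ^ (m / 2) = 1

lemma Ipow_congr {a b : ℕ} (h : (a : ZMod 4) = b) : I ^ a = I ^ b := by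
  have hmod : a % 4 = b % 4 := (ZMod.natCast_eq_natCast_iff a b 4).mp h
  have key : ∀ c : ℕ, I ^ c = I ^ (c % 4) := by
    intro c
    conv_lhs => rw [← Nat.div_add_mod c 4]
    rw [pow_add, pow_mul, I_pow_four, one_pow, one_mul]
  rw [key a, key b, hmod]

lemma part1 (m : ℕ) (hm : 0 < m) (heven : Even m) :
    ∃ (g : ZMod m → ℂ) (h : ℂ), GLevel m g h ∧ g 0 = (m : ℂ) / 2 - 1 := by
  haveI : NeZero m := ⟨hm.ne'⟩
  set K := m / 2 with hK
  have hm2 : m = 2 * K := by obtain ⟨k, hk⟩ := heven; omega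
  have hK1 : 1 ≤ K := by omega
  have hmC : (m : ℂ) = 2 * (K : ℂ) := by exact_mod_cast congrArg (Nat.cast (R := ℂ)) hm2
  set g : ZMod m → ℂ := fun t => if t = 0 then (m : ℂ) / 2 - 1 else -I ^ (t.val ^ 2) with hg
  have hne0 : ∀ s : ℕ, 0 < s → s < m → (s : ZMod m) ≠ 0 := by
    intro s hs1 hs2 h0
    have := ZMod.val_natCast_of_lt hs2
    rw [h0, ZMod.val_zero] at this; omega
  have gval : ∀ s : ℕ, 0 < s → s < m → g ((s : ℕ) : ZMod m) = -I ^ (s ^ 2) := by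
    intro s hs1 hs2
    rw [hg]; simp only [if_neg (hne0 s hs1 hs2), ZMod.val_natCast_of_lt hs2]
  have g0 : g 0 = (m : ℂ) / 2 - 1 := if_pos rfl
  refine ⟨g, (-1 : ℂ) ^ (K + 1), ⟨?_, ?_, ?_, ?_⟩, g0⟩
  · -- (i)
    intro s hs1 hs2
    have h2s : 2 * s < m := by omega
    have hterm : ∀ t ∈ range m, (-1 : ℂ) ^ t * g (t : ZMod m)
        * g ((2 * (s : ℤ) - (t : ℤ) : ℤ) : ZMod m)
        = (if t = 0 then -(K : ℂ) else 0) + (if t = 2 * s then -(K : ℂ) else 0) + 1 := by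
      intro t ht
      rw [mem_range] at ht
      rcases eq_or_ne t 0 with rfl | ht0
      · rw [if_pos rfl, if_neg (by omega)]
        have hidx : ((2 * (s : ℤ) - ((0:ℕ) : ℤ) : ℤ) : ZMod m) = ((2 * s : ℕ) : ZMod m) := by
          push_cast; ring
        rw [hidx, gval (2 * s) (by omega) h2s]
        have : I ^ ((2 * s) ^ 2) = I ^ (0 : ℕ) := by
          apply Ipow_congr
          push_cast
          have : ∀ x : ZMod 4, (2 * x) ^ 2 = 0 := by decide
          simpa using this (s : ZMod 4)
        rw [this]
        simp only [Nat.cast_zero, g0, pow_zero, hmC]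
        push_cast; ring
      rcases eq_or_ne t (2 * s) with rfl | ht2
      · rw [if_neg ht0, if_pos rfl]
        have hidx : ((2 * (s : ℤ) - ((2 * s : ℕ) : ℤ) : ℤ) : ZMod m) = (0 : ZMod m) := by
          push_cast
          ring_nf
        rw [hidx, gval (2 * s) (by omega) h2s, g0]
        have : I ^ ((2 * s) ^ 2) = I ^ (0 : ℕ) := by
          apply Ipow_congr; push_cast
          have : ∀ x : ZMod 4, (2 * x) ^ 2 = 0 := by decide
          simpa using this (s : ZMod 4)
        rw [this]
        have hpow : (-1 : ℂ) ^ (2 * s) = 1 := by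
          rw [pow_mul]; norm_num
        rw [hpow, hmC]; push_cast; ring
      · rw [if_neg ht0, if_neg ht2]
        set u : ZMod m := ((2 * (s : ℤ) - (t : ℤ) : ℤ) : ZMod m) with hu
        have hu0 : u ≠ 0 := by
          intro h0
          rw [hu] at h0
          have hdvd : (m : ℤ) ∣ 2 * (s : ℤ) - t :=
            (ZMod.intCast_zmod_eq_zero_iff_dvd _ _).mp h0
          have := Int.eq_zero_of_abs_lt_dvd hdvd (by
            rw [abs_lt]; constructor <;> [omega; omega])
          omega
        have hgu : g u = -I ^ (u.val ^ 2) := by rw [hg]; simp only [if_neg hu0]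
        have hgt : g ((t : ℕ) : ZMod m) = -I ^ (t ^ 2) := gval t (by omega) ht
        rw [hgt, hgu]
        set v := u.val with hv
        have hvzmod : ((v : ℕ) : ZMod m) = u := ZMod.natCast_rightInverse u
        have hvz : ((v : ℤ) : ZMod m) = ((2 * (s : ℤ) - (t : ℤ) : ℤ) : ZMod m) := by
          rw [Int.cast_natCast, hvzmod, hu]
        obtain ⟨j, hj⟩ : (m : ℤ) ∣ ((v : ℤ) - (2 * (s : ℤ) - t)) := by
          have := (ZMod.intCast_eq_intCast_iff _ _ _).mp hvz
          exact Int.ModEq.dvd this.symm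
        have hvj : (v : ℤ) = 2 * (s : ℤ) - t + m * j := by omega
        have hI : (-1 : ℂ) ^ t * (-I ^ (t ^ 2)) * (-I ^ (v ^ 2)) = I ^ (2 * t + (t ^ 2 + v ^ 2)) := by
          rw [show (-1 : ℂ) = I ^ 2 from by rw [I_sq], ← pow_mul]
          rw [pow_add, pow_add]; ring
        rw [hI]
        have : I ^ (2 * t + (t ^ 2 + v ^ 2)) = I ^ (0 : ℕ) := by
          apply Ipow_congr
          have hv4 : (v : ZMod 4) = 2 * (s : ZMod 4) - (t : ZMod 4)
              + 2 * ((K : ZMod 4) * (j : ZMod 4)) := by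
            have : ((v : ℤ) : ZMod 4) = ((2 * (s : ℤ) - t + m * j : ℤ) : ZMod 4) :=
              congrArg _ hvj
            push_cast at this
            rw [this, hm2]; push_cast; ring
          push_cast
          rw [hv4]
          have key : ∀ A B D : ZMod 4, 2 * B + (B ^ 2 + (2 * A - B + 2 * D) ^ 2) = 0 := by decide
          exact key _ _ _
        rw [this]; norm_num
    rw [Finset.sum_congr rfl hterm]
    rw [Finset.sum_add_distrib, Finset.sum_add_distrib,
      Finset.sum_ite_eq' (range m) 0 (fun _ => -(K : ℂ)),
      Finset.sum_ite_eq' (range m) (2 * s) (fun _ => -(K : ℂ))]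
    rw [if_pos (mem_range.mpr hm), if_pos (mem_range.mpr h2s)]
    rw [Finset.sum_const, Finset.card_range, nsmul_eq_mul, mul_one, hmC]
    push_cast; ring
  · -- (ii)
    intro s hs1 hs2
    have hsm : s < m := by omega
    have hms : 0 < m - s ∧ m - s < m := by omega
    rw [gval s hs1 hsm, gval (m - s) hms.1 hms.2]
    have : I ^ (s ^ 2) * I ^ ((m - s) ^ 2) = I ^ (s ^ 2 + (m - s) ^ 2) := (pow_add _ _ _).symm
    rw [neg_mul_neg, this]
    have hc : I ^ (s ^ 2 + (m - s) ^ 2) = I ^ (2 * s) := by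
      apply Ipow_congr
      have hcast : ((m - s : ℕ) : ZMod 4) = 2 * (K : ZMod 4) - (s : ZMod 4) := by
        have hms2 : (m - s : ℕ) = 2 * K - s := by omega
        rw [hms2, Nat.cast_sub (by omega : s ≤ 2 * K)]; push_cast; ring
      push_cast [hcast]
      have key : ∀ A C : ZMod 4, A ^ 2 + (2 * C - A) ^ 2 = 2 * A := by decide
      exact key _ _
    rw [hc, pow_mul, I_sq]
  · -- (iii)
    intro s hs1 hs2
    have hsm : s < m := by omega
    have hks : 0 < K + s ∧ K + s < m := by omega
    have h2s : 0 < 2 * s ∧ 2 * s < m := by omega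
    have hKm : 0 < K ∧ K < m := by omega
    rw [gval s hs1 hsm, gval (K + s) hks.1 hks.2, gval (2 * s) h2s.1 h2s.2, gval K hKm.1 hKm.2]
    have lhs_eq : ((-1 : ℂ) ^ (K + 1)) ^ s * (-I ^ (s ^ 2)) * (-I ^ ((K + s) ^ 2))
        = I ^ (2 * ((K + 1) * s) + (s ^ 2 + (K + s) ^ 2)) := by
      rw [show (-1 : ℂ) = I ^ 2 from by rw [I_sq], ← pow_mul, ← pow_mul]
      rw [pow_add, pow_add]; ring
    have rhs_eq : (-I ^ ((2 * s) ^ 2)) * (-I ^ (K ^ 2)) = I ^ ((2 * s) ^ 2 + K ^ 2) := by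
      rw [neg_mul_neg, pow_add]
    rw [lhs_eq, rhs_eq]
    apply Ipow_congr
    push_cast
    have key : ∀ A B : ZMod 4, 2 * ((A + 1) * B) + (B ^ 2 + (A + B) ^ 2)
        = (2 * B) ^ 2 + A ^ 2 := by decide
    exact key _ _
  · -- (iv)
    rw [← pow_mul, ← hK]
    apply Even.neg_one_pow
    rcases Nat.even_or_odd K with h | h
    · exact h.mul_left _
    · exact (Odd.add_one h).mul_right _

section Part2Aux

variable {F : Type*} [Field F] [Fintype F] [DecidableEq F] {m : ℕ}
  {χ : MulChar F ℂ} {ψ : AddChar F ℂ}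

/-- A character of maximal order is injective-on-units (trivial kernel form). -/
lemma ker_triv (hq : Fintype.card F = m + 1) (hχ : orderOf χ = m)
    {x : F} (hx : x ≠ 0) (h1 : χ x = 1) : x = 1 := by
  obtain ⟨u, hu⟩ := IsCyclic.exists_generator (α := Fˣ)
  have hcardu : Fintype.card Fˣ = m := by rw [Fintype.card_units, hq]; omega
  have hordu : orderOf u = m := by
    rw [orderOf_eq_card_of_forall_mem_zpowers hu, Nat.card_eq_fintype_card, hcardu]
  have hχm : χ ^ m = 1 := by rw [← hχ]; exact pow_orderOf_eq_one χ
  have hord_val : orderOf (χ u.val) = m := by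
    apply Nat.dvd_antisymm
    · apply orderOf_dvd_of_pow_eq_one
      rw [← MulChar.pow_apply_coe, hχm, MulChar.one_apply_coe]
    · rw [← hχ]
      apply orderOf_dvd_of_pow_eq_one
      rw [MulChar.eq_iff hu, MulChar.pow_apply_coe, pow_orderOf_eq_one, MulChar.one_apply_coe]
  -- write x as a power of u
  have hxu : IsUnit x := isUnit_iff_ne_zero.mpr hx
  obtain ⟨a, ha⟩ := mem_powers_iff_mem_zpowers.mpr (hu hxu.unit)
  have hxa : x = (u.val) ^ a := by
    have : (u ^ a : Fˣ) = hxu.unit := ha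
    have hv := congrArg Units.val this
    rw [Units.val_pow_eq_pow_val, IsUnit.unit_spec] at hv
    exact hv.symm
  have : (χ u.val) ^ a = 1 := by
    rw [← map_pow, ← hxa, h1]
  have hdvd : m ∣ a := hord_val ▸ orderOf_dvd_of_pow_eq_one this
  obtain ⟨c, rfl⟩ := hdvd
  have : u ^ (m * c) = 1 := by
    rw [pow_mul, ← hordu, pow_orderOf_eq_one, one_pow]
  rw [hxa, ← Units.val_pow_eq_pow_val, this, Units.val_one]

lemma chi_neg_one (hq : Fintype.card F = m + 1) (hχ : orderOf χ = m)
    (hF2 : ringChar F ≠ 2) : χ (-1) = -1 := by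
  have hsq : χ (-1) * χ (-1) = 1 := by
    rw [← map_mul]; norm_num
  have hne : χ (-1) ≠ 1 := by
    intro h
    have hne0 : (-1 : F) ≠ 0 := by
      intro h0
      exact one_ne_zero (neg_eq_zero.mp h0)
    have := ker_triv hq hχ hne0 h
    exact Ring.neg_one_ne_one_of_char_ne_two hF2 this
  have : (χ (-1) - 1) * (χ (-1) + 1) = 0 := by linear_combination hsq
  rcases mul_eq_zero.mp this with h | h
  · exact absurd (by linear_combination h) hne
  · linear_combination h

lemma geom_zero (hq : Fintype.card F = m + 1) (hχ : orderOf χ = m)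
    {x : F} (hx : x ≠ 0) (hx1 : x ≠ 1) : ∑ t ∈ range m, (χ x) ^ t = 0 := by
  have hχm : χ ^ m = 1 := by rw [← hχ]; exact pow_orderOf_eq_one χ
  have hxm : (χ x) ^ m = 1 := by
    rw [← MulChar.pow_apply' χ (by
      have : 0 < m := by
        have := Fintype.one_lt_card (α := F); omega
      omega), hχm, MulChar.one_apply (isUnit_iff_ne_zero.mpr hx)]
  have hne1 : χ x ≠ 1 := fun h => hx1 (ker_triv hq hχ hx h)
  have := geom_sum_eq hne1 m
  rw [this, hxm, sub_self, zero_div]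

lemma gauss_one (hψ : ψ.IsPrimitive) : gaussSum (1 : MulChar F ℂ) ψ = -1 := by
  have hψ1 : ψ ≠ 1 := by
    intro h
    have := hψ (a := 1) one_ne_zero
    rw [h] at this
    exact this (by ext x; simp [AddChar.mulShift_apply])
  have : ∀ x : F, (1 : MulChar F ℂ) x * ψ x = ψ x - if x = 0 then 1 else 0 := by
    intro x
    rcases eq_or_ne x 0 with rfl | hx
    · simp [MulChar.map_nonunit (1 : MulChar F ℂ) (not_isUnit_zero), AddChar.map_zero_eq_one]
    · rw [MulChar.one_apply (isUnit_iff_ne_zero.mpr hx), if_neg hx, one_mul, sub_zero]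
  rw [gaussSum, Finset.sum_congr rfl (fun x _ => this x), Finset.sum_sub_distrib,
    AddChar.sum_eq_zero_of_ne_one hψ1, Finset.sum_ite_eq' univ (0 : F) (fun _ => (1:ℂ)),
    if_pos (mem_univ _)]
  norm_num

end Part2Aux

section Part2Aux2

variable {F : Type*} [Field F] [Fintype F] [DecidableEq F] {m : ℕ}
  {χ : MulChar F ℂ} {ψ : AddChar F ℂ}

/-- the complex quadratic character -/
noncomputable def qc (F : Type*) [Field F] [Fintype F] [DecidableEq F] : MulChar F ℂ :=
  (quadraticChar F).ringHomComp (Int.castRingHom ℂ)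

lemma chi_half (hq : Fintype.card F = m + 1) (hχ : orderOf χ = m)
    {K : ℕ} (hmK : m = 2 * K) (hK1 : 1 ≤ K) : χ ^ K = qc F := by
  obtain ⟨u, hu⟩ := IsCyclic.exists_generator (α := Fˣ)
  have hcardu : Fintype.card Fˣ = m := by rw [Fintype.card_units, hq]; omega
  have hordu : orderOf u = m := by
    rw [orderOf_eq_card_of_forall_mem_zpowers hu, Nat.card_eq_fintype_card, hcardu]
  have hχm : χ ^ m = 1 := by rw [← hχ]; exact pow_orderOf_eq_one χ
  have hord_val : orderOf (χ u.val) = m := by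
    apply Nat.dvd_antisymm
    · apply orderOf_dvd_of_pow_eq_one
      rw [← MulChar.pow_apply_coe, hχm, MulChar.one_apply_coe]
    · rw [← hχ]
      apply orderOf_dvd_of_pow_eq_one
      rw [MulChar.eq_iff hu, MulChar.pow_apply_coe, pow_orderOf_eq_one, MulChar.one_apply_coe]
  rw [MulChar.eq_iff hu, MulChar.pow_apply_coe]
  -- LHS is -1
  have hsq : ((χ u.val) ^ K) * ((χ u.val) ^ K) = 1 := by
    rw [← pow_add]
    have : K + K = m := by omega
    rw [this, ← hord_val, pow_orderOf_eq_one]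
  have hne : (χ u.val) ^ K ≠ 1 := by
    intro h
    have := orderOf_dvd_of_pow_eq_one h
    rw [hord_val] at this
    have := Nat.le_of_dvd (by omega) this
    omega
  have hL : (χ u.val) ^ K = -1 := by
    have h0 : ((χ u.val) ^ K - 1) * ((χ u.val) ^ K + 1) = 0 := by linear_combination hsq
    rcases mul_eq_zero.mp h0 with h | h
    · exact absurd (by linear_combination h) hne
    · linear_combination h
  -- RHS is -1
  have hns : ¬ IsSquare (u.val : F) := by
    rintro ⟨b, hb⟩
    have hb0 : b ≠ 0 := by
      intro h0; rw [h0, mul_zero] at hb; exact u.ne_zero hb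
    set w := (isUnit_iff_ne_zero.mpr hb0).unit with hw
    have huw : u = w * w := by
      ext; rw [hb, Units.val_mul, IsUnit.unit_spec]
    have hu1 : u ^ K = 1 := by
      rw [huw, ← sq, ← pow_mul]
      have h2K : 2 * K = Fintype.card Fˣ := by omega
      rw [h2K, pow_card_eq_one]
    have := orderOf_dvd_of_pow_eq_one hu1
    rw [hordu] at this
    have := Nat.le_of_dvd (by omega) this
    omega
  have hR : qc F u.val = -1 := by
    rw [qc, MulChar.ringHomComp_apply, quadraticChar_neg_one_iff_not_isSquare.mpr hns]
    simp
  rw [hL, hR]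

end Part2Aux2

section Part2Aux3

variable {F : Type*} [Field F] [Fintype F] [DecidableEq F]
  {ψ : AddChar F ℂ}

lemma hd_jacobi (hF2 : ringChar F ≠ 2) {φ : MulChar F ℂ} (hφ : φ ≠ 1) :
    φ 4 * jacobiSum φ φ = jacobiSum (qc F) φ := by
  have h2 : (2 : F) ≠ 0 := Ring.two_ne_zero hF2
  have h4 : (4 : F) ≠ 0 := by
    have : (4 : F) = 2 * 2 := by norm_num
    rw [this]; exact mul_ne_zero h2 h2
  have hbij : Function.Bijective (fun u : F => (1 - u) / 2) := by
    apply Function.bijective_iff_has_inverse.mpr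
    exact ⟨fun x => 1 - 2 * x, fun u => by field_simp; ring, fun x => by field_simp; ring⟩
  have hcount : ∀ v : F, ∑ x ∈ univ.filter (fun x => x ^ 2 = v), φ (1 - x ^ 2)
      = (((quadraticChar F v + 1 : ℤ) : ℂ)) * φ (1 - v) := by
    intro v
    have hc : ∀ x ∈ univ.filter (fun x : F => x ^ 2 = v), φ (1 - x ^ 2) = φ (1 - v) := by
      intro x hx; rw [(mem_filter.mp hx).2]
    rw [Finset.sum_congr rfl hc, Finset.sum_const, nsmul_eq_mul]
    congr 1
    have := quadraticChar_card_sqrts hF2 v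
    have hsets : {x : F | x ^ 2 = v}.toFinset = univ.filter (fun x => x ^ 2 = v) := by
      ext x; simp
    rw [hsets] at this
    exact_mod_cast congrArg (fun z : ℤ => (z : ℂ)) this
  calc φ 4 * jacobiSum φ φ
      = φ 4 * ∑ x : F, φ (x * (1 - x)) := by
        rw [jacobiSum]
        congr 1
        exact Finset.sum_congr rfl fun x _ => (map_mul φ x (1 - x)).symm
    _ = φ 4 * ∑ u : F, φ (((1 - u) / 2) * (1 - (1 - u) / 2)) := by
        congr 1
        exact (Fintype.sum_bijective _ hbij _ _ fun u => rfl).symm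
    _ = ∑ u : F, φ (4 * (((1 - u) / 2) * (1 - (1 - u) / 2))) := by
        rw [Finset.mul_sum]
        exact Finset.sum_congr rfl fun u _ => (map_mul φ 4 _).symm
    _ = ∑ u : F, φ (1 - u ^ 2) := by
        apply Finset.sum_congr rfl
        intro u _
        congr 1
        field_simp
        ring
    _ = ∑ v : F, ∑ x ∈ univ.filter (fun x => x ^ 2 = v), φ (1 - x ^ 2) := by
        exact (Finset.sum_fiberwise_of_maps_to (fun x _ => mem_univ (x ^ 2)) _).symm
    _ = ∑ v : F, (((quadraticChar F v + 1 : ℤ) : ℂ)) * φ (1 - v) := by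
        exact Finset.sum_congr rfl fun v _ => hcount v
    _ = (∑ v : F, qc F v * φ (1 - v)) + ∑ v : F, φ (1 - v) := by
        rw [← Finset.sum_add_distrib]
        apply Finset.sum_congr rfl
        intro v _
        rw [qc, MulChar.ringHomComp_apply]
        simp only [eq_intCast]
        push_cast
        ring
    _ = jacobiSum (qc F) φ + 0 := by
        congr 1
        have hbij2 : Function.Bijective (fun v : F => 1 - v) := by
          apply Function.bijective_iff_has_inverse.mpr
          exact ⟨fun x => 1 - x, fun u => by ring, fun x => by ring⟩
        rw [Fintype.sum_bijective _ hbij2 _ (fun w => φ w) (fun v => rfl)]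
        exact φ.sum_eq_zero_of_ne_one hφ
    _ = jacobiSum (qc F) φ := add_zero _

lemma hd (hψ : ψ.IsPrimitive) (hF2 : ringChar F ≠ 2) {φ : MulChar F ℂ}
    (hφ : φ ≠ 1) (hφ2 : φ * φ ≠ 1) :
    φ 4 * (gaussSum φ ψ * gaussSum (qc F * φ) ψ)
      = gaussSum (φ * φ) ψ * gaussSum (qc F) ψ := by
  have hη2 : qc F * qc F = 1 := by
    have := ((quadraticChar_isQuadratic F).comp (Int.castRingHom ℂ)).sq_eq_one
    rwa [sq] at this
  have hηφ : qc F * φ ≠ 1 := by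
    intro h
    apply hφ2
    have : φ = qc F := by
      calc φ = 1 * φ := (one_mul φ).symm
        _ = (qc F * qc F) * φ := by rw [hη2]
        _ = qc F * (qc F * φ) := by rw [mul_assoc]
        _ = qc F * 1 := by rw [h]
        _ = qc F := mul_one _
    rw [this, hη2]
  have hcard0 : ((Fintype.card F : ℂ)) ≠ 0 := Nat.cast_ne_zero.mpr Fintype.card_ne_zero
  have hGφ : gaussSum φ ψ ≠ 0 := gaussSum_ne_zero_of_nontrivial hcard0 hφ hψ
  have h1 : gaussSum (φ * φ) ψ * jacobiSum φ φ = gaussSum φ ψ * gaussSum φ ψ :=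
    jacobiSum_mul_nontrivial hφ2 ψ
  have h2 : gaussSum (qc F * φ) ψ * jacobiSum (qc F) φ = gaussSum (qc F) ψ * gaussSum φ ψ :=
    jacobiSum_mul_nontrivial hηφ ψ
  have hJ : jacobiSum φ φ ≠ 0 := by
    intro h0
    rw [h0, mul_zero] at h1
    exact mul_ne_zero hGφ hGφ h1.symm
  apply mul_right_cancel₀ hJ
  calc φ 4 * (gaussSum φ ψ * gaussSum (qc F * φ) ψ) * jacobiSum φ φ
      = gaussSum φ ψ * (gaussSum (qc F * φ) ψ * (φ 4 * jacobiSum φ φ)) := by ring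
    _ = gaussSum φ ψ * (gaussSum (qc F * φ) ψ * jacobiSum (qc F) φ) := by
        rw [hd_jacobi hF2 hφ]
    _ = gaussSum φ ψ * (gaussSum (qc F) ψ * gaussSum φ ψ) := by rw [h2]
    _ = gaussSum (qc F) ψ * (gaussSum φ ψ * gaussSum φ ψ) := by ring
    _ = gaussSum (qc F) ψ * (gaussSum (φ * φ) ψ * jacobiSum φ φ) := by rw [h1]
    _ = gaussSum (φ * φ) ψ * gaussSum (qc F) ψ * jacobiSum φ φ := by ring

end Part2Aux3

section Part2Aux4

variable {F : Type*} [Field F] [Fintype F] [DecidableEq F] {m : ℕ}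
  {χ : MulChar F ℂ} {ψ : AddChar F ℂ}

lemma ortho (hq : Fintype.card F = m + 1) (hχ : orderOf χ = m)
    (hF2 : ringChar F ≠ 2) (hm : 0 < m) {s : ℕ} (hs1 : 1 ≤ s) (hs2 : 2 * s < m) :
    ∑ t ∈ range m, (-1 : ℂ) ^ t * gaussSum (χ ^ ((t : ZMod m)).val) ψ
      * gaussSum (χ ^ (((2 * (s : ℤ) - (t : ℤ) : ℤ) : ZMod m)).val) ψ = 0 := by
  haveI : NeZero m := ⟨hm.ne'⟩
  set A : ℕ → ℕ := fun t => ((t : ZMod m)).val with hA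
  set B : ℕ → ℕ := fun t => (((2 * (s : ℤ) - (t : ℤ) : ℤ) : ZMod m)).val with hB
  set E : ℕ := 2 * s with hEdef
  have hχm : χ ^ m = 1 := by rw [← hχ]; exact pow_orderOf_eq_one χ
  have hpow_unit : ∀ (x : F), x ≠ 0 → ∀ n : ℕ, (χ ^ n) x = (χ x) ^ n := by
    intro x hx n
    have := MulChar.pow_apply_coe χ n (isUnit_iff_ne_zero.mpr hx).unit
    rwa [IsUnit.unit_spec] at this
  have hzm : ∀ x : F, x ≠ 0 → (χ x) ^ m = 1 := by
    intro x hx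
    rw [← hpow_unit x hx m, hχm, MulChar.one_apply (isUnit_iff_ne_zero.mpr hx)]
  have hpow_mod : ∀ (x : F), x ≠ 0 → ∀ n : ℕ, (χ x) ^ (n % m) = (χ x) ^ n := by
    intro x hx n
    conv_rhs => rw [← Nat.div_add_mod n m]
    rw [pow_add, pow_mul, hzm x hx, one_pow, one_mul]
  have hcn1 : χ (-1) = -1 := chi_neg_one hq hχ hF2
  have hEne : χ ^ E ≠ 1 := by
    intro h
    have := orderOf_dvd_of_pow_eq_one h
    rw [hχ] at this
    have := Nat.le_of_dvd (by omega) this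
    omega
  -- the inner sum over t for fixed x y
  have inner : ∀ x y : F, ∑ t ∈ range m,
      (-1 : ℂ) ^ t * ((χ ^ (A t)) x * ψ x) * ((χ ^ (B t)) y * ψ y)
      = if y = -x then (m : ℂ) * ((χ ^ E) y * (ψ x * ψ y)) else 0 := by
    intro x y
    by_cases hx : x = 0
    · subst hx
      have hz : ∀ t ∈ range m, (-1 : ℂ) ^ t * ((χ ^ (A t)) 0 * ψ 0) * ((χ ^ (B t)) y * ψ y)
          = 0 := by
        intro t _
        rw [MulChar.map_zero]
        ring
      rw [Finset.sum_eq_zero hz]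
      by_cases hy : y = -(0 : F)
      · rw [if_pos hy]
        rw [hy, neg_zero, MulChar.map_zero]
        ring
      · rw [if_neg hy]
    by_cases hy : y = 0
    · subst hy
      have hz : ∀ t ∈ range m, (-1 : ℂ) ^ t * ((χ ^ (A t)) x * ψ x) * ((χ ^ (B t)) 0 * ψ 0)
          = 0 := by
        intro t _
        rw [MulChar.map_zero]
        ring
      rw [Finset.sum_eq_zero hz]
      rw [if_neg (fun h : (0 : F) = -x => hx (by rw [← neg_neg x, ← h, neg_zero]))]
    · -- main case
      have hχy0 : χ y ≠ 0 := ((isUnit_iff_ne_zero.mpr hy).map χ).ne_zero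
      have hterm : ∀ t ∈ range m,
          (-1 : ℂ) ^ t * ((χ ^ (A t)) x * ψ x) * ((χ ^ (B t)) y * ψ y)
          = ((χ ^ E) y * (ψ x * ψ y)) * (χ (-1) * χ x * (χ y)⁻¹) ^ t := by
        intro t ht
        rw [mem_range] at ht
        have hAx : (χ ^ (A t)) x = (χ x) ^ t := by
          rw [hpow_unit x hx, hA]
          show (χ x) ^ ((t : ZMod m)).val = _
          rw [ZMod.val_natCast, hpow_mod x hx]
        have hBA : (χ y) ^ (B t) * (χ y) ^ (A t) = (χ y) ^ E := by
          rw [← pow_add]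
          have hmod : (B t + A t) % m = E % m := by
            apply (ZMod.natCast_eq_natCast_iff _ _ _).mp
            simp only [hA, hB, hEdef, Nat.cast_add, ZMod.natCast_val, ZMod.cast_id]
            push_cast
            ring
          calc (χ y) ^ (B t + A t) = (χ y) ^ ((B t + A t) % m) := (hpow_mod y hy _).symm
            _ = (χ y) ^ (E % m) := by rw [hmod]
            _ = (χ y) ^ E := hpow_mod y hy E
        have hAy : (χ y) ^ (A t) = (χ y) ^ t := by
          rw [hA]
          show (χ y) ^ ((t : ZMod m)).val = _
          rw [ZMod.val_natCast, hpow_mod y hy]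
        have hBy : (χ ^ (B t)) y = (χ y) ^ E * ((χ y) ^ t)⁻¹ := by
          rw [hpow_unit y hy, eq_mul_inv_iff_mul_eq₀ (pow_ne_zero t hχy0), ← hAy]
          exact hBA
        have hEy : (χ ^ E) y = (χ y) ^ E := hpow_unit y hy E
        rw [hAx, hBy, hEy, hcn1, mul_pow, mul_pow, inv_pow]
        ring
      rw [Finset.sum_congr rfl hterm, ← Finset.mul_sum]
      have hchid : χ (-1) * χ x * (χ y)⁻¹ = χ (-x * y⁻¹) := by
        have hinv : χ y⁻¹ = (χ y)⁻¹ := by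
          apply eq_inv_of_mul_eq_one_left
          rw [← map_mul, inv_mul_cancel₀ hy, map_one]
        rw [map_mul, hinv, show χ (-x) = χ (-1) * χ x from by rw [← map_mul, neg_one_mul]]
      rw [hchid]
      by_cases hxy : y = -x
      · rw [if_pos hxy]
        have hd1 : -x * y⁻¹ = 1 := by
          rw [hxy]
          exact mul_inv_cancel₀ (neg_ne_zero.mpr hx)
        rw [hd1, map_one]
        simp only [one_pow, Finset.sum_const, Finset.card_range, nsmul_eq_mul, mul_one]
        ring
      · rw [if_neg hxy]
        have hd0 : -x * y⁻¹ ≠ 0 := mul_ne_zero (neg_ne_zero.mpr hx) (inv_ne_zero hy)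
        have hd1 : -x * y⁻¹ ≠ 1 := by
          intro h
          apply hxy
          field_simp at h
          rw [h]
        rw [geom_zero hq hχ hd0 hd1, mul_zero]
  -- expand the Gauss sums and swap summation order
  have expand : ∀ t ∈ range m, (-1 : ℂ) ^ t * gaussSum (χ ^ (A t)) ψ * gaussSum (χ ^ (B t)) ψ
      = ∑ x : F, ∑ y : F, (-1 : ℂ) ^ t * ((χ ^ (A t)) x * ψ x) * ((χ ^ (B t)) y * ψ y) := by
    intro t _
    rw [gaussSum, gaussSum, mul_assoc, Finset.sum_mul_sum, Finset.mul_sum]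
    refine Finset.sum_congr rfl fun x _ => ?_
    rw [Finset.mul_sum]
    exact Finset.sum_congr rfl fun y _ => by ring
  rw [Finset.sum_congr rfl expand, Finset.sum_comm]
  have swap2 : ∀ x : F, ∑ t ∈ range m, ∑ y : F,
      (-1 : ℂ) ^ t * ((χ ^ (A t)) x * ψ x) * ((χ ^ (B t)) y * ψ y)
      = ∑ y : F, ∑ t ∈ range m,
      (-1 : ℂ) ^ t * ((χ ^ (A t)) x * ψ x) * ((χ ^ (B t)) y * ψ y) := fun x => by rw [Finset.sum_comm]
  rw [Finset.sum_congr rfl fun x _ => swap2 x]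
  rw [Finset.sum_congr rfl fun x _ => Finset.sum_congr rfl fun y _ => inner x y]
  have collapse : ∀ x : F, ∑ y : F, (if y = -x then (m : ℂ) * ((χ ^ E) y * (ψ x * ψ y)) else 0)
      = (m : ℂ) * (χ ^ E) (-x) := by
    intro x
    rw [Finset.sum_ite_eq' univ (-x) (fun y => (m : ℂ) * ((χ ^ E) y * (ψ x * ψ y))),
      if_pos (mem_univ _)]
    have : ψ x * ψ (-x) = 1 := by
      rw [← AddChar.map_add_eq_mul, add_neg_cancel, AddChar.map_zero_eq_one]
    rw [this, mul_one]
  rw [Finset.sum_congr rfl fun x _ => collapse x, ← Finset.mul_sum]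
  have hneg : ∑ x : F, (χ ^ E) (-x) = ∑ z : F, (χ ^ E) z :=
    Fintype.sum_bijective Neg.neg neg_involutive.bijective _ _ fun x => rfl
  rw [hneg, MulChar.sum_eq_zero_of_ne_one hEne, mul_zero]

end Part2Aux4

lemma part2 (m : ℕ) (hm : 0 < m) (heven : Even m)
    (hpp : ∃ p n : ℕ, p.Prime ∧ 0 < n ∧ m + 1 = p ^ n) :
    ∃ (g : ZMod m → ℂ) (h : ℂ), GLevel m g h ∧ (g 0) ^ 2 = 1 / ((m : ℂ) + 1) := by
  classical
  obtain ⟨p, n, hp, hn, hmpn⟩ := hpp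
  haveI : Fact p.Prime := ⟨hp⟩
  haveI : NeZero m := ⟨hm.ne'⟩
  set F := GaloisField p n with hF
  haveI : Fintype F := Fintype.ofFinite F
  have hq : Fintype.card F = m + 1 := by
    have hcc : Fintype.card F = Nat.card F := Nat.card_eq_fintype_card.symm
    rw [hcc, show Nat.card F = Nat.card (GaloisField p n) from rfl,
      GaloisField.card p n (by omega)]
    omega
  set K := m / 2 with hK
  have hm2 : m = 2 * K := by obtain ⟨k, hk⟩ := heven; omega
  have hK1 : 1 ≤ K := by omega
  have hF2 : ringChar F ≠ 2 := by
    intro h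
    have := FiniteField.even_card_iff_char_two.mp h
    rw [hq] at this
    omega
  obtain ⟨χ, hχ⟩ := MulChar.exists_mulChar_orderOf F
    (n := m) (by rw [hq]; simp) (Complex.isPrimitiveRoot_exp m hm.ne')
  set ψ := AddChar.FiniteField.primitiveChar_to_Complex F with hψdef
  have hψ : ψ.IsPrimitive := AddChar.FiniteField.primitiveChar_to_Complex_isPrimitive F
  set r : ℂ := ((Real.sqrt (m + 1) : ℝ) : ℂ) with hr
  have hm1 : ((m : ℂ) + 1) ≠ 0 := by
    have : ((m + 1 : ℕ) : ℂ) ≠ 0 := Nat.cast_ne_zero.mpr (by omega)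
    push_cast at this
    exact this
  have hr2 : r ^ 2 = (m : ℂ) + 1 := by
    rw [hr, ← Complex.ofReal_pow, Real.sq_sqrt (by positivity)]
    push_cast
    ring
  have hr0 : r ≠ 0 := by
    intro h
    rw [h] at hr2
    apply hm1
    rw [← hr2]
    ring
  set g : ZMod m → ℂ := fun a => gaussSum (χ ^ a.val) ψ / r with hg
  have hχm : χ ^ m = 1 := by rw [← hχ]; exact pow_orderOf_eq_one χ
  have hpowne : ∀ j : ℕ, 0 < j → j < m → χ ^ j ≠ 1 := by
    intro j h1 h2 h
    have := orderOf_dvd_of_pow_eq_one h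
    rw [hχ] at this
    have := Nat.le_of_dvd h1 this
    omega
  have hval : ∀ a : ℕ, a < m → ((a : ZMod m)).val = a := fun a ha => ZMod.val_natCast_of_lt ha
  refine ⟨g, χ 4, ⟨?_, ?_, ?_, ?_⟩, ?_⟩
  · -- (i)
    intro s hs1 hs2
    have h2s : 2 * s < m := by omega
    have hterm : ∀ t ∈ range m, (-1 : ℂ) ^ t * g (t : ZMod m)
        * g ((2 * (s : ℤ) - (t : ℤ) : ℤ) : ZMod m)
        = ((-1 : ℂ) ^ t * gaussSum (χ ^ ((t : ZMod m)).val) ψ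
          * gaussSum (χ ^ (((2 * (s : ℤ) - (t : ℤ) : ℤ) : ZMod m)).val) ψ) / r ^ 2 := by
      intro t _
      show (-1 : ℂ) ^ t * (gaussSum (χ ^ ((t : ZMod m)).val) ψ / r)
        * (gaussSum (χ ^ (((2 * (s : ℤ) - (t : ℤ) : ℤ) : ZMod m)).val) ψ / r) = _
      rw [sq]
      ring
    rw [Finset.sum_congr rfl hterm, ← Finset.sum_div,
      ortho hq hχ hF2 hm hs1 h2s, zero_div]
  · -- (ii)
    intro s hs1 hs2
    have hsm : s < m := by omega
    have hmsm : m - s < m := by omega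
    show gaussSum (χ ^ ((s : ZMod m)).val) ψ / r
        * (gaussSum (χ ^ (((m - s : ℕ) : ZMod m)).val) ψ / r) = (-1 : ℂ) ^ s
    rw [hval s hsm, hval (m - s) hmsm]
    have hinv : χ ^ (m - s) = (χ ^ s)⁻¹ := by
      apply eq_inv_of_mul_eq_one_left
      rw [← pow_add, Nat.sub_add_cancel (by omega), hχm]
    have hmain := gaussSum_mul_gaussSum_eq_card (hpowne s (by omega) hsm) hψ
    have hshift := mul_gaussSum_inv_eq_gaussSum (χ ^ s)⁻¹ ψ
    have hc : (χ ^ s)⁻¹ (-1) = (-1 : ℂ) ^ s := by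
      rw [MulChar.inv_apply', inv_neg_one, MulChar.pow_apply' χ (by omega),
        chi_neg_one hq hχ hF2]
    have hnum : gaussSum (χ ^ s) ψ * gaussSum (χ ^ (m - s)) ψ = (-1 : ℂ) ^ s * ((m : ℂ) + 1) := by
      rw [hinv, ← hshift]
      calc gaussSum (χ ^ s) ψ * ((χ ^ s)⁻¹ (-1) * gaussSum (χ ^ s)⁻¹ ψ⁻¹)
          = (χ ^ s)⁻¹ (-1) * (gaussSum (χ ^ s) ψ * gaussSum (χ ^ s)⁻¹ ψ⁻¹) := by ring
        _ = (-1 : ℂ) ^ s * ((m : ℂ) + 1) := by rw [hc, hmain, hq]; push_cast; ring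
    rw [div_mul_div_comm, hnum, ← sq, hr2]
    field_simp
  · -- (iii)
    intro s hs1 hs2
    have hsm : s < m := by omega
    have hKsm : K + s < m := by omega
    have h2sm : 2 * s < m := by omega
    have hKm : K < m := by omega
    show (χ 4) ^ s * (gaussSum (χ ^ ((s : ZMod m)).val) ψ / r)
        * (gaussSum (χ ^ (((K + s : ℕ) : ZMod m)).val) ψ / r)
        = gaussSum (χ ^ (((2 * s : ℕ) : ZMod m)).val) ψ / r
        * (gaussSum (χ ^ ((( K : ℕ) : ZMod m)).val) ψ / r)
    rw [hval s hsm, hval (K + s) hKsm, hval (2 * s) h2sm, hval K hKm]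
    have hη := chi_half hq hχ hm2 hK1
    have hKs : χ ^ (K + s) = qc F * χ ^ s := by rw [pow_add, hη]
    have h2ss : χ ^ (2 * s) = χ ^ s * χ ^ s := by rw [two_mul, pow_add]
    have hφ2 : χ ^ s * χ ^ s ≠ 1 := by
      rw [← pow_add]
      exact hpowne (s + s) (by omega) (by omega)
    have hc4 : (χ 4) ^ s = (χ ^ s) 4 := (MulChar.pow_apply' χ (by omega) 4).symm
    have hnum := hd hψ hF2 (hpowne s (by omega) hsm) hφ2
    rw [hKs, h2ss, hη, hc4]
    calc (χ ^ s) 4 * (gaussSum (χ ^ s) ψ / r) * (gaussSum (qc F * χ ^ s) ψ / r)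
        = ((χ ^ s) 4 * (gaussSum (χ ^ s) ψ * gaussSum (qc F * χ ^ s) ψ)) / (r * r) := by ring
      _ = (gaussSum (χ ^ s * χ ^ s) ψ * gaussSum (qc F) ψ) / (r * r) := by rw [hnum]
      _ = gaussSum (χ ^ s * χ ^ s) ψ / r * (gaussSum (qc F) ψ / r) := by ring
  · -- (iv)
    have h2 : (2 : F) ≠ 0 := Ring.two_ne_zero hF2
    have h4 : (4 : F) = 2 * 2 := by norm_num
    calc (χ 4) ^ K = ((χ 2) * (χ 2)) ^ K := by rw [← map_mul, ← h4]
      _ = (χ 2) ^ m := by rw [← sq, ← pow_mul, ← hm2]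
      _ = (χ ^ m) 2 := (MulChar.pow_apply' χ (by omega) 2).symm
      _ = 1 := by rw [hχm, MulChar.one_apply (isUnit_iff_ne_zero.mpr h2)]
  · -- g 0
    show (gaussSum (χ ^ ((0 : ZMod m)).val) ψ / r) ^ 2 = 1 / ((m : ℂ) + 1)
    rw [ZMod.val_zero, pow_zero, gauss_one hψ, div_pow, hr2]
    norm_num

theorem stmt13 (m : ℕ) (hm : 0 < m) (heven : Even m) :
    (∃ (g : ZMod m → ℂ) (h : ℂ), GLevel m g h ∧ g 0 = (m : ℂ) / 2 - 1) ∧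
    ((∃ p n : ℕ, p.Prime ∧ 0 < n ∧ m + 1 = p ^ n) →
      ∃ (g : ZMod m → ℂ) (h : ℂ), GLevel m g h ∧ (g 0) ^ 2 = 1 / ((m : ℂ) + 1)) ∧
    (∃ (g : ZMod m → ℂ) (h : ℂ), GLevel m g h) := by
  obtain ⟨g, h, hgl, hg0⟩ := part1 m hm heven
  exact ⟨⟨g, h, hgl, hg0⟩, fun hpp => part2 m hm heven hpp, ⟨g, h, hgl⟩⟩
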